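/- For binary vectors $a, b \in \{0,1\}^D$, define point sequences $A(a)$ and $B(b)$ in $\mathbb{R}^2$ of length $D$ as follows, using the points $\alpha_0 = (-1.61, 0.5)$, $\alpha_1 = (-1.61, -0.5)$, $\alpha_0' = (1.61, 0.5)$, $\alpha_1' = (1.61, -0.5)$, $\beta_0 = (-0.61, 0.5)$, $\beta_1 = (-0.61, -0.5)$, $\beta_0' = (0.61, 0.5)$, $\beta_1' = (0.61, -0.5)$: the $j$-th point of $A(a)$ is $\alpha_{a_j}$ if $j$ is odd and $\alpha_{a_j}'$ if $j$ is even; the $j$-th point of $B(b)$ is $\beta_{b_j}$ if $j$ is odd and $\beta_{b_j}'$ if $j$ is even. Then: if $a = b$, the discrete Fréchet distance satisfies $d_{dF}(A(a), B(b)) \le 1$; if $a \ne b$, then $d_{dF}(A(a), B(b)) \ge \sqrt{2}$; moreover, for any non-parallel traversal $T$ of $A(a)$ and $B(b)$, $\max_{(i,j) \in T} \|A(a)_i - B(b)_j\|_2 \ge 2$. -/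

import Mathlib

open Set

/-- Continuous Fréchet distance between two curves parametrized on `[0,1]`. -/
noncomputable def frechetDist {E : Type*} [PseudoMetricSpace E] (f g : ℝ → E) : ℝ :=
  sInf { r : ℝ | ∃ φ ψ : ℝ → ℝ,
    ContinuousOn φ (Set.Icc 0 1) ∧ ContinuousOn ψ (Set.Icc 0 1) ∧
    MonotoneOn φ (Set.Icc 0 1) ∧ MonotoneOn ψ (Set.Icc 0 1) ∧
    φ 0 = 0 ∧ φ 1 = 1 ∧ ψ 0 = 0 ∧ ψ 1 = 1 ∧
    ∀ t ∈ Set.Icc (0:ℝ) 1, dist (f (φ t)) (g (ψ t)) ≤ r }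

/-- The directed line segment from `a` to `b` as a curve on `[0,1]`. -/
def seg {E : Type*} [AddCommGroup E] [Module ℝ E] (a b : E) : ℝ → E :=
  fun s => (1 - s) • a + s • b

/-- Polygonal curve with vertices `p 0, …, p n`, parametrized on `[0,1]`. -/
noncomputable def polyline {E : Type*} [AddCommGroup E] [Module ℝ E] {n : ℕ}
    (p : Fin (n + 1) → E) (s : ℝ) : E :=
  let u : ℝ := s * n
  let i : ℕ := min ⌊u⌋₊ (n - 1)
  (1 - (u - i)) • p ⟨min i n, Nat.lt_succ_of_le (Nat.min_le_right _ _)⟩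
    + (u - i) • p ⟨min (i + 1) n, Nat.lt_succ_of_le (Nat.min_le_right _ _)⟩

/-- Polygonal curve through the points of a list. -/
noncomputable def polylineL {E : Type*} [AddCommGroup E] [Module ℝ E] (l : List E) : ℝ → E :=
  polyline (n := l.length - 1) (fun i => l.getD i.val 0)

/-- `τ` restricted to `[0,1]` is the polygonal curve with vertices
`τ (t 0), …, τ (t m)` at parameters `0 = t 0 < ⋯ < t m = 1`. -/
def IsPolylineOn (τ : ℝ → ℝ) (m : ℕ) (t : ℕ → ℝ) : Prop :=
  t 0 = 0 ∧ t m = 1 ∧ (∀ i < m, t i < t (i + 1)) ∧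
  ∀ i < m, ∀ s, t i ≤ s → s ≤ t (i + 1) →
    τ s = τ (t i) + (s - t i) / (t (i + 1) - t i) * (τ (t (i + 1)) - τ (t i))

/-- `s` is the parameter of a vertex (local extremum) of the time series `τ`. -/
def VertexAt (τ : ℝ → ℝ) (s : ℝ) : Prop :=
  s ∈ Set.Icc (0:ℝ) 1 ∧
    (IsLocalMaxOn τ (Set.Icc 0 1) s ∨ IsLocalMinOn τ (Set.Icc 0 1) s)

/-- A `δ`-signature of `τ : [0,1] → ℝ`, given by parameters
`0 = t 0 < t 1 < ⋯ < t ℓ = 1` (so the signature has `ℓ + 1` vertices and `ℓ ≥ 1` edges);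
the signature curve itself is `polyline (fun i => τ (t i))`. -/
structure IsDeltaSignature (δ : ℝ) (τ : ℝ → ℝ) (ℓ : ℕ) (t : ℕ → ℝ) : Prop where
  one_le : 1 ≤ ℓ
  mono : ∀ i < ℓ, t i < t (i + 1)
  start : t 0 = 0
  finish : t ℓ = 1
  nondeg : ∀ i, 1 ≤ i → i < ℓ →
    τ (t i) ∉ Set.uIcc (τ (t (i - 1))) (τ (t (i + 1)))
  dir_up : ∀ i < ℓ, τ (t i) < τ (t (i + 1)) →
    ∀ a b, t i ≤ a → a ≤ b → b ≤ t (i + 1) → τ a - τ b ≤ 2 * δ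
  dir_down : ∀ i < ℓ, τ (t (i + 1)) < τ (t i) →
    ∀ a b, t i ≤ a → a ≤ b → b ≤ t (i + 1) → τ b - τ a ≤ 2 * δ
  minedge_int : ∀ i, 1 ≤ i → i ≤ ℓ - 2 → 2 * δ < |τ (t (i + 1)) - τ (t i)|
  minedge_bnd : ∀ i < ℓ, (i = 0 ∨ i = ℓ - 1) → δ < |τ (t (i + 1)) - τ (t i)|
  range_int : ∀ i, 1 ≤ i → i ≤ ℓ - 2 → ∀ s, t i ≤ s → s ≤ t (i + 1) →
    τ s ∈ Set.uIcc (τ (t i)) (τ (t (i + 1)))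
  range_first : 2 ≤ ℓ → ∀ s, t 0 ≤ s → s ≤ t 1 →
    τ s ∈ Set.uIcc (τ (t 0)) (τ (t 1)) ∪ Set.Icc (τ (t 0) - δ) (τ (t 0) + δ)
  range_last : 2 ≤ ℓ → ∀ s, t (ℓ - 1) ≤ s → s ≤ t ℓ →
    τ s ∈ Set.uIcc (τ (t (ℓ - 1))) (τ (t ℓ)) ∪ Set.Icc (τ (t ℓ) - δ) (τ (t ℓ) + δ)
  range_single : ℓ = 1 → ∀ s, (0:ℝ) ≤ s → s ≤ 1 →
    τ s ∈ Set.uIcc (τ (t 0)) (τ (t 1)) ∪ Set.Icc (τ (t 0) - δ) (τ (t 0) + δ)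
      ∪ Set.Icc (τ (t 1) - δ) (τ (t 1) + δ)

/-- One step of a traversal: each index advances by 0 or 1, at least one advances. -/
def TravStep (a b : ℕ × ℕ) : Prop :=
  a.1 ≤ b.1 ∧ b.1 ≤ a.1 + 1 ∧ a.2 ≤ b.2 ∧ b.2 ≤ a.2 + 1 ∧ a ≠ b

/-- A traversal of two point sequences of lengths `m` and `k` (0-based indices). -/
def IsTraversal (m k : ℕ) (T : List (ℕ × ℕ)) : Prop :=
  T.head? = some (0, 0) ∧ T.getLast? = some (m - 1, k - 1) ∧ List.Chain' TravStep T

/-- Discrete Fréchet distance between the point sequences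
`p 0, …, p (m-1)` and `q 0, …, q (k-1)`. -/
noncomputable def ddF {E : Type*} [PseudoMetricSpace E] (m k : ℕ) (p q : ℕ → E) : ℝ :=
  sInf { r : ℝ | ∃ T : List (ℕ × ℕ), IsTraversal m k T ∧
    ∀ ij ∈ T, dist (p ij.1) (q ij.2) ≤ r }

/-- The subsequence of local extrema (vertex sequence) of a list of values. -/
def vertexSeq {α : Type*} [LinearOrder α] : List α → List α
  | [] => []
  | [a] => [a]
  | [a, b] => [a, b]
  | a :: b :: c :: rest =>
    if (a ≤ b ∧ b ≤ c) ∨ (c ≤ b ∧ b ≤ a) then vertexSeq (a :: c :: rest)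
    else a :: vertexSeq (b :: c :: rest)
termination_by l => l.length

/-- A point of the Euclidean plane. -/
noncomputable def pt2 (x y : ℝ) : EuclideanSpace ℝ (Fin 2) :=
  (WithLp.equiv 2 (Fin 2 → ℝ)).symm ![x, y]

/-- Alice's vector gadget: the `j`-th point (0-based) encodes bit `a j`. -/
noncomputable def Aseq (a : ℕ → Bool) (j : ℕ) : EuclideanSpace ℝ (Fin 2) :=
  if j % 2 = 0 then (if a j then pt2 (-1.61) (-0.5) else pt2 (-1.61) 0.5)
  else (if a j then pt2 1.61 (-0.5) else pt2 1.61 0.5)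

/-- Bob's vector gadget: the `j`-th point (0-based) encodes bit `b j`. -/
noncomputable def Bseq (b : ℕ → Bool) (j : ℕ) : EuclideanSpace ℝ (Fin 2) :=
  if j % 2 = 0 then (if b j then pt2 (-0.61) (-0.5) else pt2 (-0.61) 0.5)
  else (if b j then pt2 0.61 (-0.5) else pt2 0.61 0.5)


lemma dist_pt2 (x y x' y' : ℝ) :
    dist (pt2 x y) (pt2 x' y') = Real.sqrt ((x - x')^2 + (y - y')^2) := by
  unfold pt2
  rw [EuclideanSpace.dist_eq]
  simp [Fin.sum_univ_two, sq, Real.dist_eq, abs_mul_abs_self]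

lemma dist_eq_one (a b : ℕ → Bool) (i j : ℕ) (h : i % 2 = j % 2) (hb : a i = b j) :
    dist (Aseq a i) (Bseq b j) = 1 := by
  unfold Aseq Bseq
  rcases Nat.mod_two_eq_zero_or_one i with hi | hi <;>
    rw [hi] at h <;> rw [hi, ← h] <;> cases hab : a i <;>
      simp [← hb, hab, dist_pt2] <;> norm_num

lemma dist_eq_sqrt2 (a b : ℕ → Bool) (i j : ℕ) (h : i % 2 = j % 2) (hb : a i ≠ b j) :
    dist (Aseq a i) (Bseq b j) = Real.sqrt 2 := by
  unfold Aseq Bseq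
  have hb' : b j = !(a i) := by cases h1 : a i <;> cases h2 : b j <;> simp_all
  rcases Nat.mod_two_eq_zero_or_one i with hi | hi <;>
    rw [hi] at h <;> rw [hi, ← h] <;> cases hab : a i <;>
      simp [hab ▸ hb', dist_pt2] <;> norm_num

lemma two_le_dist (a b : ℕ → Bool) (i j : ℕ) (h : i % 2 ≠ j % 2) :
    2 ≤ dist (Aseq a i) (Bseq b j) := by
  have h2 : (2:ℝ) = Real.sqrt 4 := by
    rw [show (4:ℝ) = 2^2 by norm_num, Real.sqrt_sq (by norm_num)]
  unfold Aseq Bseq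
  rcases Nat.mod_two_eq_zero_or_one i with hi | hi <;>
    rcases Nat.mod_two_eq_zero_or_one j with hj | hj <;>
      rw [hi, hj] at h ⊢ <;> first
        | exact absurd rfl h
        | (cases a i <;> cases b j <;>
            simp [dist_pt2, h2] <;> (apply Real.sqrt_le_sqrt; norm_num))

lemma diag_chain : ∀ (T : List (ℕ × ℕ)) (s : ℕ), List.Chain' TravStep ((s, s) :: T) →
    (∀ p ∈ T, p.1 % 2 = p.2 % 2) →
    (s, s) :: T = (List.range' s (T.length + 1)).map (fun i => (i, i)) := by
  intro T
  induction T with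
  | nil => intro s _ _; simp
  | cons hd tl ih =>
    intro s hchain hpar
    have hstep : TravStep (s, s) hd := (List.isChain_cons_cons.mp hchain).1
    have hhd : hd = (s + 1, s + 1) := by
      obtain ⟨c, d⟩ := hd
      have hp := hpar (c, d) (by simp)
      obtain ⟨h1, h2, h3, h4, h5⟩ := hstep
      simp only [Prod.mk.injEq, ne_eq, not_and] at *
      constructor <;> omega
    subst hhd
    have := ih (s + 1) (List.isChain_cons_cons.mp hchain).2
      (fun p hp => hpar p (List.mem_cons_of_mem _ hp))
    rw [List.range'_succ, List.map_cons]
    simpa using this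

lemma trav_parallel (D : ℕ) (hD : 1 ≤ D) (T : List (ℕ × ℕ)) (hT : IsTraversal D D T)
    (hpar : ∀ p ∈ T, p.1 % 2 = p.2 % 2) :
    T = (List.range D).map (fun i => (i, i)) := by
  obtain ⟨hhead, hlast, hchain⟩ := hT
  match T, hhead with
  | (c, d) :: T', hhead =>
    have hcd : (c, d) = ((0:ℕ), (0:ℕ)) := by simpa using hhead
    rw [hcd] at hchain hlast ⊢
    have heq := diag_chain T' 0 hchain (fun p hp => hpar p (List.mem_cons_of_mem _ hp))
    rw [heq] at hlast ⊢
    have hlen : T'.length + 1 = D := by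
      rw [List.range'_concat, List.map_append] at hlast
      simp at hlast
      omega
    rw [hlen, ← List.range_eq_range']

lemma parallel_is_traversal (D : ℕ) (hD : 1 ≤ D) :
    IsTraversal D D ((List.range D).map (fun i => (i, i))) := by
  obtain ⟨n, rfl⟩ : ∃ n, D = n + 1 := ⟨D - 1, by omega⟩
  refine ⟨?_, ?_, ?_⟩
  · rw [List.range_succ_eq_map]
    simp
  · rw [List.range_succ, List.map_append]
    simp
  · change List.IsChain _ _
    rw [List.isChain_map, List.isChain_range_succ]
    intro m _
    refine ⟨by omega, by omega, by omega, by omega, by simp⟩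

lemma mem_parallel (D : ℕ) (ij : ℕ × ℕ) (h : ij ∈ (List.range D).map (fun i => (i, i))) :
    ∃ i < D, ij = (i, i) := by
  simp only [List.mem_map, List.mem_range] at h
  obtain ⟨i, hi, rfl⟩ := h
  exact ⟨i, hi, rfl⟩

/-- equal binary vectors give discrete Fréchet distance at most 1, distinct
vectors give at least √2, and any non-parallel traversal incurs a distance of at least 2. -/
theorem vector_gadgets (D : ℕ) (hD : 1 ≤ D) (a b : ℕ → Bool) :
    ((∀ j < D, a j = b j) → ddF D D (Aseq a) (Bseq b) ≤ 1) ∧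
    ((∃ j < D, a j ≠ b j) → Real.sqrt 2 ≤ ddF D D (Aseq a) (Bseq b)) ∧
    (∀ T : List (ℕ × ℕ), IsTraversal D D T →
      T ≠ (List.range D).map (fun i => (i, i)) →
      ∃ ij ∈ T, 2 ≤ dist (Aseq a ij.1) (Bseq b ij.2)) := by
  set P : List (ℕ × ℕ) := (List.range D).map (fun i => (i, i)) with hP
  have hPtrav : IsTraversal D D P := parallel_is_traversal D hD
  -- Part 3 (key): non-parallel traversals hit distance ≥ 2.
  have key : ∀ T : List (ℕ × ℕ), IsTraversal D D T → T ≠ P →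
      ∃ ij ∈ T, 2 ≤ dist (Aseq a ij.1) (Bseq b ij.2) := by
    intro T hT hTP
    by_contra hcon
    push_neg at hcon
    have hpar : ∀ p ∈ T, p.1 % 2 = p.2 % 2 := by
      intro p hp
      by_contra hne
      exact absurd (two_le_dist a b p.1 p.2 hne) (not_le.mpr (hcon p hp))
    exact hTP (trav_parallel D hD T hT hpar)
  refine ⟨?_, ?_, key⟩
  · -- equal vectors: ddF ≤ 1
    intro hab
    apply csInf_le
    · refine ⟨0, fun r hr => ?_⟩
      obtain ⟨T, hT, hd⟩ := hr
      obtain ⟨hhead, -, -⟩ := hT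
      match T, hhead with
      | x :: T', hhead =>
        exact le_trans dist_nonneg (hd x List.mem_cons_self)
    · refine ⟨P, hPtrav, fun ij hij => ?_⟩
      obtain ⟨i, hi, rfl⟩ := mem_parallel D ij hij
      exact le_of_eq (dist_eq_one a b i i rfl (hab i hi))
  · -- distinct vectors: √2 ≤ ddF
    rintro ⟨j, hj, hne⟩
    apply le_csInf
    · refine ⟨Real.sqrt 2, P, hPtrav, fun ij hij => ?_⟩
      obtain ⟨i, hi, rfl⟩ := mem_parallel D ij hij
      by_cases hbi : a i = b i
      · rw [dist_eq_one a b i i rfl hbi]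
        rw [show (1:ℝ) = Real.sqrt 1 from Real.sqrt_one.symm]
        exact Real.sqrt_le_sqrt one_le_two
      · exact le_of_eq (dist_eq_sqrt2 a b i i rfl hbi)
    · intro r hr
      obtain ⟨T, hT, hd⟩ := hr
      by_cases hTP : T = P
      · subst hTP
        have hjj : (j, j) ∈ P := by
          rw [hP]
          exact List.mem_map.mpr ⟨j, List.mem_range.mpr hj, rfl⟩
        calc Real.sqrt 2 = dist (Aseq a j) (Bseq b j) :=
              (dist_eq_sqrt2 a b j j rfl hne).symm
          _ ≤ r := hd (j, j) hjj
      · obtain ⟨ij, hij, h2⟩ := key T hT hTP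
        have h4 : Real.sqrt 4 = 2 := by
          rw [show (4:ℝ) = 2^2 by norm_num, Real.sqrt_sq (by norm_num)]
        have : Real.sqrt 2 ≤ 2 := by
          calc Real.sqrt 2 ≤ Real.sqrt 4 := Real.sqrt_le_sqrt (by norm_num)
            _ = 2 := h4
        exact le_trans (le_trans this h2) (hd ij hij)
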